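/- Let G be a weighted graph with Laplacian L, and L_c a combinatorial Laplacian obtained from L by Laplacian-consistent coarsening with respect to a partition of V. For every vertex subset S_c of the coarse graph G_c, let S ⊆ V be the union of the contraction sets mapped into S_c. Then the conductance satisfies φ(S) ≤ φ_c(S_c), where φ(S) = w(S, S̄)/min{w(S), w(S̄)}. Consequently, φ_k(G) ≤ φ_k(G_c) for every k. -/

import Mathlib

open Matrix Finset

/-- Weight of the cut between `S` and its complement. -/
def cutw {N : ℕ} (W : Matrix (Fin N) (Fin N) ℝ) (S : Finset (Fin N)) : ℝ :=
  ∑ i ∈ S, ∑ j ∈ Sᶜ, W i j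

/-- Volume of `S`: `w(S) = Σ_{i∈S} Σ_{j∈V} w_{ij}`. -/
def volw {N : ℕ} (W : Matrix (Fin N) (Fin N) ℝ) (S : Finset (Fin N)) : ℝ :=
  ∑ i ∈ S, ∑ j, W i j

/-- Conductance `φ(S) = w(S, S̄) / min(w(S), w(S̄))`. -/
noncomputable def conduct {N : ℕ} (W : Matrix (Fin N) (Fin N) ℝ) (S : Finset (Fin N)) : ℝ :=
  cutw W S / min (volw W S) (volw W Sᶜ)

/-- Weights of the coarse graph under Laplacian-consistent coarsening: the weight between
two distinct coarse vertices is the cut weight between the corresponding contraction sets. -/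
def coarseW {N n : ℕ} (W : Matrix (Fin N) (Fin N) ℝ) (φ : Fin N → Fin n) :
    Matrix (Fin n) (Fin n) ℝ :=
  Matrix.of fun r q =>
    if r = q then 0
    else ∑ i ∈ Finset.univ.filter fun i => φ i = r,
      ∑ j ∈ Finset.univ.filter fun j => φ j = q, W i j

/-- The preimage in `G` of a coarse vertex set `S_c`. -/
def preim {N n : ℕ} (φ : Fin N → Fin n) (Sc : Finset (Fin n)) : Finset (Fin N) :=
  Finset.univ.filter fun i => φ i ∈ Sc


section AuxConduct

variable {N n : ℕ}

private lemma fiber_sum (φ : Fin N → Fin n) (Sc : Finset (Fin n)) (f : Fin N → ℝ) :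
    ∑ r ∈ Sc, ∑ i ∈ Finset.univ.filter (fun i => φ i = r), f i
      = ∑ i ∈ Finset.univ.filter (fun i => φ i ∈ Sc), f i := by
  rw [← Finset.sum_fiberwise_of_maps_to (g := φ)
      (fun i hi => (Finset.mem_filter.mp hi).2) f]
  refine Finset.sum_congr rfl fun r hr => Finset.sum_congr ?_ fun _ _ => rfl
  ext i
  simp only [Finset.mem_filter, Finset.mem_univ, true_and]
  exact ⟨fun h => ⟨h ▸ hr, h⟩, fun h => h.2⟩

private lemma preim_compl (φ : Fin N → Fin n) (Sc : Finset (Fin n)) :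
    preim φ Scᶜ = (preim φ Sc)ᶜ := by
  ext i; simp [preim]

private lemma coarseW_nonneg {W : Matrix (Fin N) (Fin N) ℝ} (hnn : ∀ i j, 0 ≤ W i j)
    (φ : Fin N → Fin n) (r q : Fin n) : 0 ≤ coarseW W φ r q := by
  unfold coarseW
  simp only [Matrix.of_apply]
  split
  · exact le_refl _
  · exact Finset.sum_nonneg fun i _ => Finset.sum_nonneg fun j _ => hnn i j

private lemma coarseW_symm {W : Matrix (Fin N) (Fin N) ℝ} (hsym : Wᵀ = W)
    (φ : Fin N → Fin n) (r q : Fin n) : coarseW W φ r q = coarseW W φ q r := by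
  have hW : ∀ i j, W i j = W j i := fun i j => by
    rw [← hsym, Matrix.transpose_apply, hsym]
  unfold coarseW
  simp only [Matrix.of_apply]
  by_cases h : r = q
  · simp [h]
  · rw [if_neg h, if_neg (Ne.symm h)]
    exact Finset.sum_comm.trans (Finset.sum_congr rfl fun j _ => Finset.sum_congr rfl fun i _ => hW i j)

private lemma cutw_compl {m : ℕ} {W : Matrix (Fin m) (Fin m) ℝ}
    (hW : ∀ i j, W i j = W j i) (S : Finset (Fin m)) :
    cutw W S = cutw W Sᶜ := by
  unfold cutw
  rw [compl_compl]
  exact Finset.sum_comm.trans (Finset.sum_congr rfl fun i _ => Finset.sum_congr rfl fun j _ => hW j i)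

private lemma cutw_nonneg {m : ℕ} {W : Matrix (Fin m) (Fin m) ℝ}
    (hnn : ∀ i j, 0 ≤ W i j) (S : Finset (Fin m)) : 0 ≤ cutw W S :=
  Finset.sum_nonneg fun i _ => Finset.sum_nonneg fun j _ => hnn i j

private lemma cutw_le_volw {m : ℕ} {W : Matrix (Fin m) (Fin m) ℝ}
    (hnn : ∀ i j, 0 ≤ W i j) (S : Finset (Fin m)) : cutw W S ≤ volw W S :=
  Finset.sum_le_sum fun i _ =>
    Finset.sum_le_sum_of_subset_of_nonneg (Finset.subset_univ _)
      (fun j _ _ => hnn i j)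

private lemma cut_eq {W : Matrix (Fin N) (Fin N) ℝ} (φ : Fin N → Fin n)
    (Sc : Finset (Fin n)) :
    cutw (coarseW W φ) Sc = cutw W (preim φ Sc) := by
  unfold cutw
  have h1 : ∀ r ∈ Sc, ∀ q ∈ Scᶜ, coarseW W φ r q
      = ∑ i ∈ Finset.univ.filter (fun i => φ i = r),
          ∑ j ∈ Finset.univ.filter (fun j => φ j = q), W i j := by
    intro r hr q hq
    have hne : r ≠ q := fun h => (Finset.mem_compl.mp hq) (h ▸ hr)
    simp [coarseW, hne]
  calc ∑ r ∈ Sc, ∑ q ∈ Scᶜ, coarseW W φ r q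
      = ∑ r ∈ Sc, ∑ q ∈ Scᶜ, ∑ i ∈ Finset.univ.filter (fun i => φ i = r),
          ∑ j ∈ Finset.univ.filter (fun j => φ j = q), W i j :=
        Finset.sum_congr rfl fun r hr => Finset.sum_congr rfl fun q hq => h1 r hr q hq
    _ = ∑ r ∈ Sc, ∑ i ∈ Finset.univ.filter (fun i => φ i = r),
          ∑ q ∈ Scᶜ, ∑ j ∈ Finset.univ.filter (fun j => φ j = q), W i j :=
        Finset.sum_congr rfl fun r _ => Finset.sum_comm
    _ = ∑ r ∈ Sc, ∑ i ∈ Finset.univ.filter (fun i => φ i = r),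
          ∑ j ∈ preim φ Scᶜ, W i j :=
        Finset.sum_congr rfl fun r _ => Finset.sum_congr rfl fun i _ =>
          fiber_sum φ Scᶜ _
    _ = ∑ i ∈ preim φ Sc, ∑ j ∈ preim φ Scᶜ, W i j := fiber_sum φ Sc _
    _ = ∑ i ∈ preim φ Sc, ∑ j ∈ (preim φ Sc)ᶜ, W i j := by rw [preim_compl]

private lemma vol_ge {W : Matrix (Fin N) (Fin N) ℝ} (hnn : ∀ i j, 0 ≤ W i j)
    (φ : Fin N → Fin n) (Sc : Finset (Fin n)) :
    volw (coarseW W φ) Sc ≤ volw W (preim φ Sc) := by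
  unfold volw
  have huniv : (Finset.univ.filter fun j : Fin N => φ j ∈ (Finset.univ : Finset (Fin n)))
      = Finset.univ := by simp
  calc ∑ r ∈ Sc, ∑ q, coarseW W φ r q
      ≤ ∑ r ∈ Sc, ∑ q, ∑ i ∈ Finset.univ.filter (fun i => φ i = r),
          ∑ j ∈ Finset.univ.filter (fun j => φ j = q), W i j := by
        refine Finset.sum_le_sum fun r _ => Finset.sum_le_sum fun q _ => ?_
        unfold coarseW
        simp only [Matrix.of_apply]
        split
        · exact Finset.sum_nonneg fun i _ => Finset.sum_nonneg fun j _ => hnn i j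
        · exact le_refl _
    _ = ∑ r ∈ Sc, ∑ i ∈ Finset.univ.filter (fun i => φ i = r),
          ∑ q, ∑ j ∈ Finset.univ.filter (fun j => φ j = q), W i j :=
        Finset.sum_congr rfl fun r _ => Finset.sum_comm
    _ = ∑ r ∈ Sc, ∑ i ∈ Finset.univ.filter (fun i => φ i = r), ∑ j, W i j := by
        refine Finset.sum_congr rfl fun r _ => Finset.sum_congr rfl fun i _ => ?_
        rw [fiber_sum φ Finset.univ (fun j => W i j), huniv]
    _ = ∑ i ∈ preim φ Sc, ∑ j, W i j := fiber_sum φ Sc _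

end AuxConduct

/-- Cuts are preserved by Laplacian-consistent coarsening: for every coarse vertex set `S_c`
the lifted set `S` satisfies `φ(S) ≤ φ_c(S_c)`; consequently, for every `k`, any family of
`k` disjoint coarse subsets can be lifted to `k` disjoint subsets of no larger conductance,
so that `φ_k(G) ≤ φ_k(G_c)`. -/
theorem conductance_coarsening {N n : ℕ}
    (W : Matrix (Fin N) (Fin N) ℝ) (hsym : Wᵀ = W)
    (hnn : ∀ i j, 0 ≤ W i j) (hdiag : ∀ i, W i i = 0)
    (φ : Fin N → Fin n) (hφ : Function.Surjective φ) :
    (∀ Sc : Finset (Fin n), conduct W (preim φ Sc) ≤ conduct (coarseW W φ) Sc) ∧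
    ∀ (k : ℕ) (Sc : Fin k → Finset (Fin n)),
      (Pairwise fun a b => Disjoint (Sc a) (Sc b)) →
      ∃ S : Fin k → Finset (Fin N),
        (Pairwise fun a b => Disjoint (S a) (S b)) ∧
        ∀ i, conduct W (S i) ≤ conduct (coarseW W φ) (Sc i) := by
  have key : ∀ Sc : Finset (Fin n), conduct W (preim φ Sc) ≤ conduct (coarseW W φ) Sc := by
    intro Sc
    have hcut : cutw W (preim φ Sc) = cutw (coarseW W φ) Sc := (cut_eq φ Sc).symm
    have hv1 : volw (coarseW W φ) Sc ≤ volw W (preim φ Sc) := vol_ge hnn φ Sc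
    have hv2 : volw (coarseW W φ) Scᶜ ≤ volw W (preim φ Sc)ᶜ := by
      rw [← preim_compl]; exact vol_ge hnn φ Scᶜ
    have hmin : min (volw (coarseW W φ) Sc) (volw (coarseW W φ) Scᶜ)
        ≤ min (volw W (preim φ Sc)) (volw W (preim φ Sc)ᶜ) := min_le_min hv1 hv2
    have hcnn : ∀ r q, 0 ≤ coarseW W φ r q := coarseW_nonneg hnn φ
    have hc0 : 0 ≤ cutw (coarseW W φ) Sc := cutw_nonneg hcnn Sc
    have hcle : cutw (coarseW W φ) Sc
        ≤ min (volw (coarseW W φ) Sc) (volw (coarseW W φ) Scᶜ) := by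
      refine le_min (cutw_le_volw hcnn Sc) ?_
      rw [cutw_compl (fun r q => coarseW_symm hsym φ r q) Sc]
      exact cutw_le_volw hcnn Scᶜ
    unfold conduct
    rw [hcut]
    rcases lt_or_ge 0 (min (volw (coarseW W φ) Sc) (volw (coarseW W φ) Scᶜ)) with hpos | hz
    · exact div_le_div_of_nonneg_left hc0 hpos hmin
    · have h0 : cutw (coarseW W φ) Sc = 0 := le_antisymm (hcle.trans hz) hc0
      simp [h0]
  refine ⟨key, fun k Sc hdisj => ⟨fun i => preim φ (Sc i), ?_, fun i => key (Sc i)⟩⟩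
  intro a b hab
  rw [Finset.disjoint_left]
  intro x hx hx'
  simp only [preim, Finset.mem_filter] at hx hx'
  exact (Finset.disjoint_left.mp (hdisj hab)) hx.2 hx'.2
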